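/- Let p_1,…,p_n : ℝ^k → ℝ be continuously differentiable and L-positively homogeneous (L > 0), let ℓ be the exponential or logistic loss, 𝓛(W) = Σ_i ℓ(p_i(W)), and let W : [0,∞) → ℝ^k be a C¹ gradient flow with dW_t/dt = −∇𝓛(W_t), 𝓛(W_0) < ℓ(0). Assume additionally: ‖W_t‖ → ∞; W_t/‖W_t‖ converges; α(W_t)/‖W_t‖^L → a for some a > 0; and ⟨W_t, −∇𝓛(W_t)⟩/(‖W_t‖·‖∇𝓛(W_t)‖) → 1. Partition the coordinates of ℝ^k into blocks, writing W_t = (U_1(t),…,U_r(t)) and denoting by ∇_{U_j}𝓛 and ∇_{U_j}α the corresponding blocks of gradients. Then s_j(t) := ‖U_j(t)‖^L/‖W_t‖^L converges to some s̄_j for every j; for every j, lim_t ‖U_j(t)‖·‖∇_{U_j}𝓛(W_t)‖/(‖W_t‖·‖∇𝓛(W_t)‖) = lim_t ⟨U_j(t), −∇_{U_j}𝓛(W_t)⟩/(‖W_t‖·‖∇𝓛(W_t)‖); and for every j with s̄_j > 0: lim_t ‖U_j(t)‖/‖W_t‖ = lim_t ‖∇_{U_j}𝓛(W_t)‖/‖∇𝓛(W_t)‖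 = s̄_j^{1/L}, lim_t ⟨U_j(t), −∇_{U_j}𝓛(W_t)⟩/(‖U_j(t)‖·‖∇_{U_j}𝓛(W_t)‖) = 1, and lim_t ⟨U_j(t), ∇_{U_j}α(W_t)⟩/‖U_j(t)‖^L = lim_t ‖∇_{U_j}α(W_t)‖/‖U_j(t)‖^{L−1} = a·L·s̄_j^{(2−L)/L}. -/

import Mathlib

open Filter

open scoped RealInnerProductSpace

/-- Euclidean norm of the block of coordinates `s` of a vector. -/
noncomputable def blockNorm {k : ℕ} (s : Finset (Fin k))
    (V : EuclideanSpace ℝ (Fin k)) : ℝ :=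
  Real.sqrt (∑ i ∈ s, V i ^ 2)

/-- Euclidean inner product of the blocks of coordinates `s` of two vectors. -/
noncomputable def blockInner {k : ℕ} (s : Finset (Fin k))
    (V U : EuclideanSpace ℝ (Fin k)) : ℝ :=
  ∑ i ∈ s, V i * U i


set_option maxHeartbeats 1600000

section prelude
open Filter

lemma xexp_le_one (x : ℝ) : x * Real.exp (-x) ≤ 1 := by
  have h1 : x ≤ Real.exp x := by nlinarith [Real.add_one_le_exp x]
  have h2 : (0:ℝ) < Real.exp x := Real.exp_pos x
  rw [Real.exp_neg, ← div_eq_mul_inv, div_le_one h2]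
  exact h1

lemma frac_le_log {x : ℝ} (hx : 0 ≤ x) : x / (1 + x) ≤ Real.log (1 + x) := by
  have h1 : (0:ℝ) < 1 + x := by linarith
  have h2 := Real.log_le_sub_one_of_pos (x := (1+x)⁻¹) (by positivity)
  rw [Real.log_inv] at h2
  have h3 : x / (1+x) = 1 - (1+x)⁻¹ := by field_simp; ring
  linarith

lemma log_le_self' {x : ℝ} (hx : 0 ≤ x) : Real.log (1 + x) ≤ x := by
  have := Real.log_le_sub_one_of_pos (x := 1 + x) (by linarith)
  linarith

lemma loss_package (n : ℕ) (hn : 0 < n) (ℓ : ℝ → ℝ)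
    (hℓ : ℓ = (fun z => Real.exp (-z)) ∨ ℓ = fun z => Real.log (1 + Real.exp (-z))) :
    ∃ (ℓd ψ ψd : ℝ → ℝ),
      (∀ z, 0 < ℓ z) ∧
      (∀ z, HasDerivAt ℓ (ℓd z) z) ∧
      Function.Injective ℓ ∧
      (∀ y, 0 < y → ℓ (ψ y) = y) ∧
      (∀ y, 0 < y → HasDerivAt ψ (ψd y) y) ∧
      (∀ y, 0 < y → ψd y < 0) ∧
      (∀ z z', ℓ z ≤ ℓ z' → z' ≤ z) ∧
      (∀ (A : ℝ), 1 ≤ A → ∀ q : Fin n → ℝ, (∑ i, ℓ (q i)) = ℓ A →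
        (A - 1 ≤ ψd (ℓ A) * (∑ i, ℓd (q i) * q i) ∧
         ψd (ℓ A) * (∑ i, ℓd (q i) * q i) ≤ (1 + Real.exp (-A)) * (A + n + 1))) := by
  rcases hℓ with hℓ | hℓ
  · -- exponential loss
    subst hℓ
    refine ⟨fun z => -Real.exp (-z), fun y => -Real.log y, fun y => -y⁻¹, ?_, ?_, ?_, ?_, ?_, ?_, ?_, ?_⟩
    · intro z; exact Real.exp_pos _
    · intro z
      simpa [Function.comp_def] using ((Real.hasDerivAt_exp (-z)).comp z (hasDerivAt_neg z))
    · intro z1 z2 h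
      simpa using Real.exp_injective h
    · intro y hy; simp [Real.exp_log hy]
    · intro y hy
      exact (Real.hasDerivAt_log hy.ne').neg
    · intro y hy; simp [hy]
    · intro z z' h
      have := Real.exp_le_exp.mp h
      linarith
    · intro A hA q hsum
      simp only at hsum ⊢
      have hq : ∀ i, A ≤ q i := by
        intro i
        have h1 : Real.exp (-(q i)) ≤ ∑ j, Real.exp (-(q j)) :=
          Finset.single_le_sum (f := fun j => Real.exp (-(q j)))
            (fun j _ => (Real.exp_pos _).le) (Finset.mem_univ i)
        rw [hsum] at h1
        have := Real.exp_le_exp.mp h1; linarith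
      have hE : (0:ℝ) < Real.exp (-A) := Real.exp_pos _
      have hlow : A * Real.exp (-A) ≤ ∑ i, Real.exp (-(q i)) * q i := by
        calc A * Real.exp (-A) = ∑ i, Real.exp (-(q i)) * A := by
              rw [← Finset.sum_mul, hsum]; ring
        _ ≤ _ := Finset.sum_le_sum fun i _ =>
            mul_le_mul_of_nonneg_left (hq i) (Real.exp_pos _).le
      have hup : ∑ i, Real.exp (-(q i)) * q i ≤ (A + n) * Real.exp (-A) := by
        have hterm : ∀ i ∈ Finset.univ (α := Fin n),
            Real.exp (-(q i)) * q i ≤ Real.exp (-(q i)) * A + Real.exp (-A) := by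
          intro i _
          have h3 : Real.exp (-(q i)) = Real.exp (-A) * Real.exp (-(q i - A)) := by
            rw [← Real.exp_add]; ring_nf
          have h4 := xexp_le_one (q i - A)
          nlinarith [Real.exp_pos (-(q i - A)), hq i, hE]
        calc ∑ i, Real.exp (-(q i)) * q i
            ≤ ∑ i, (Real.exp (-(q i)) * A + Real.exp (-A)) := Finset.sum_le_sum hterm
        _ = (∑ i, Real.exp (-(q i))) * A + n * Real.exp (-A) := by
            rw [Finset.sum_add_distrib, ← Finset.sum_mul]
            simp [Finset.card_univ]
        _ = (A + n) * Real.exp (-A) := by rw [hsum]; ring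
      have hsimp : -(Real.exp (-A))⁻¹ * (∑ i, -Real.exp (-(q i)) * q i)
          = (Real.exp (-A))⁻¹ * (∑ i, Real.exp (-(q i)) * q i) := by
        simp only [neg_mul, Finset.sum_neg_distrib]
        ring
      constructor
      · rw [hsimp]
        have : A ≤ (Real.exp (-A))⁻¹ * (∑ i, Real.exp (-(q i)) * q i) := by
          rw [le_inv_mul_iff₀ hE]
          linarith [hlow]
        linarith
      · rw [hsimp]
        have h5 : (Real.exp (-A))⁻¹ * (∑ i, Real.exp (-(q i)) * q i) ≤ A + n := by
          rw [inv_mul_le_iff₀ hE]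
          nlinarith [hup]
        nlinarith [hE.le, hA]
  · -- logistic loss
    subst hℓ
    refine ⟨fun z => -Real.exp (-z) / (1 + Real.exp (-z)),
      fun y => -Real.log (Real.exp y - 1),
      fun y => -(Real.exp y / (Real.exp y - 1)), ?_, ?_, ?_, ?_, ?_, ?_, ?_, ?_⟩
    · intro z
      exact Real.log_pos (by nlinarith [Real.exp_pos (-z)])
    · intro z
      have h1 : HasDerivAt (fun z : ℝ => 1 + Real.exp (-z)) (-Real.exp (-z)) z := by
        simpa using (((Real.hasDerivAt_exp (-z)).comp z (hasDerivAt_neg z))).const_add 1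
      simpa using h1.log (by nlinarith [Real.exp_pos (-z)])
    · intro z1 z2 h
      simp only at h
      have h1 : (0:ℝ) < 1 + Real.exp (-z1) := by nlinarith [Real.exp_pos (-z1)]
      have h2 : (0:ℝ) < 1 + Real.exp (-z2) := by nlinarith [Real.exp_pos (-z2)]
      have h3 := congrArg Real.exp h
      rw [Real.exp_log h1, Real.exp_log h2] at h3
      have h4 : Real.exp (-z1) = Real.exp (-z2) := by linarith
      have := Real.exp_injective h4
      linarith [neg_injective this]
    · intro y hy
      have h1 : (0:ℝ) < Real.exp y - 1 := by nlinarith [Real.add_one_le_exp y]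
      simp only [neg_neg, Real.exp_log h1]
      rw [show (1 + (Real.exp y - 1)) = Real.exp y by ring, Real.log_exp]
    · intro y hy
      have h1 : (0:ℝ) < Real.exp y - 1 := by nlinarith [Real.add_one_le_exp y]
      have h2 : HasDerivAt (fun y : ℝ => Real.exp y - 1) (Real.exp y) y :=
        (Real.hasDerivAt_exp y).sub_const 1
      exact (h2.log h1.ne').neg
    · intro y hy
      have h1 : (0:ℝ) < Real.exp y - 1 := by nlinarith [Real.add_one_le_exp y]
      have : 0 < Real.exp y / (Real.exp y - 1) := by positivity
      linarith
    · intro z z' h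
      simp only at h
      have h1 : (0:ℝ) < 1 + Real.exp (-z) := by nlinarith [Real.exp_pos (-z)]
      have h2 : (0:ℝ) < 1 + Real.exp (-z') := by nlinarith [Real.exp_pos (-z')]
      have h3 := Real.exp_le_exp.mpr h
      rw [Real.exp_log h1, Real.exp_log h2] at h3
      have h4 : Real.exp (-z) ≤ Real.exp (-z') := by linarith
      have := Real.exp_le_exp.mp h4
      linarith
    · intro A hA q hsum
      simp only at hsum ⊢
      set β := Real.exp (-A) with hβdef
      have hβ : 0 < β := Real.exp_pos _
      have h1β : (0:ℝ) < 1 + β := by linarith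
      have hposi : ∀ i : Fin n, (0:ℝ) < 1 + Real.exp (-q i) := fun i => by
        nlinarith [Real.exp_pos (-q i)]
      have hq : ∀ i, A ≤ q i := by
        intro i
        have h1 : Real.log (1 + Real.exp (-q i)) ≤ ∑ j, Real.log (1 + Real.exp (-q j)) :=
          Finset.single_le_sum (f := fun j => Real.log (1 + Real.exp (-q j)))
            (fun j _ => Real.log_nonneg (by nlinarith [Real.exp_pos (-q j)])) (Finset.mem_univ i)
        rw [hsum] at h1
        have h2 := Real.exp_le_exp.mpr h1
        rw [Real.exp_log (hposi i), Real.exp_log h1β] at h2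
        have h3 : Real.exp (-q i) ≤ β := by linarith
        have := Real.exp_le_exp.mp h3
        linarith
      set w : Fin n → ℝ := fun i => Real.exp (-q i) / (1 + Real.exp (-q i)) with hwdef
      have hw : ∀ i, 0 ≤ w i := fun i => by positivity
      set S := ∑ i, w i * q i with hSdef
      set Sw := ∑ i, w i with hSwdef
      set Eq := ∑ i, Real.exp (-q i) with hEqdef
      have hSw0 : 0 ≤ Sw := Finset.sum_nonneg fun i _ => hw i
      have hEq0 : 0 ≤ Eq := Finset.sum_nonneg fun i _ => (Real.exp_pos _).le
      have hS0 : 0 ≤ S := Finset.sum_nonneg fun i _ =>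
        mul_nonneg (hw i) (by linarith [hq i])
      have a1 : A * Sw ≤ S := by
        rw [hSwdef, Finset.mul_sum]
        exact Finset.sum_le_sum fun i _ => by
          rw [mul_comm]
          exact mul_le_mul_of_nonneg_left (hq i) (hw i)
      have a2 : Eq ≤ (1 + β) * Sw := by
        rw [hSwdef, Finset.mul_sum]
        refine Finset.sum_le_sum fun i _ => ?_
        have hid : Real.exp (-q i) = w i * (1 + Real.exp (-q i)) := by
          rw [hwdef]; field_simp
        have h2 : 1 + Real.exp (-q i) ≤ 1 + β := by
          have := Real.exp_le_exp.mpr (neg_le_neg (hq i))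
          simp only [hβdef]; linarith
        calc Real.exp (-q i) = w i * (1 + Real.exp (-q i)) := hid
        _ ≤ w i * (1 + β) := mul_le_mul_of_nonneg_left h2 (hw i)
        _ = (1 + β) * w i := by ring
      have a3 : β ≤ Eq * (1 + β) := by
        have b1 : Real.log (1 + β) ≤ Eq := by
          rw [← hsum, hEqdef]
          exact Finset.sum_le_sum fun i _ => log_le_self' (Real.exp_pos _).le
        have b2 : β / (1 + β) ≤ Real.log (1 + β) := frac_le_log hβ.le
        exact (div_le_iff₀ h1β).mp (le_trans b2 b1)
      have a4 : S ≤ A * Eq + n * β := by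
        have hterm : ∀ i ∈ Finset.univ (α := Fin n),
            w i * q i ≤ Real.exp (-q i) * A + β := by
          intro i _
          have hw_le : w i ≤ Real.exp (-q i) := by
            rw [hwdef]
            exact div_le_self (Real.exp_pos _).le (by nlinarith [Real.exp_pos (-q i)])
          have hq0 : 0 < q i := by linarith [hq i]
          have h6 : w i * q i ≤ Real.exp (-q i) * q i :=
            mul_le_mul_of_nonneg_right hw_le hq0.le
          have h3 : Real.exp (-q i) = β * Real.exp (-(q i - A)) := by
            rw [hβdef, ← Real.exp_add]; ring_nf
          have h4 := xexp_le_one (q i - A)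
          nlinarith [Real.exp_pos (-(q i - A)), hq i, hβ]
        calc S ≤ ∑ i, (Real.exp (-q i) * A + β) := Finset.sum_le_sum hterm
        _ = Eq * A + n * β := by
            rw [Finset.sum_add_distrib, ← Finset.sum_mul]
            simp [Finset.card_univ, hEqdef]
        _ = A * Eq + n * β := by ring
      have a5 : Sw ≤ β := by
        have b1 : Sw ≤ ∑ i, Real.log (1 + Real.exp (-q i)) := by
          rw [hSwdef]
          exact Finset.sum_le_sum fun i _ => frac_le_log (Real.exp_pos _).le
        rw [hsum] at b1
        linarith [log_le_self' hβ.le]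
      have a6 : A * β ≤ 1 := xexp_le_one A
      have hT : (-(Real.exp (Real.log (1 + β)) / (Real.exp (Real.log (1 + β)) - 1))) *
          (∑ i, -Real.exp (-q i) / (1 + Real.exp (-q i)) * q i) = (1 + β) * S / β := by
        rw [Real.exp_log h1β, add_sub_cancel_left]
        simp only [neg_div, neg_mul, Finset.sum_neg_distrib, mul_neg, neg_neg]
        rw [hSdef, hwdef, div_mul_eq_mul_div]
      rw [hT]
      have h5 : A * β ≤ (1 + β) ^ 2 * S := by
        have c1 := mul_le_mul_of_nonneg_left a1 (by positivity : (0:ℝ) ≤ (1 + β) ^ 2)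
        have c2 := mul_le_mul_of_nonneg_left a2 (by positivity : (0:ℝ) ≤ A * (1 + β))
        have c3 := mul_le_mul_of_nonneg_left a3 (by positivity : (0:ℝ) ≤ A)
        nlinarith [c1, c2, c3]
      constructor
      · rw [le_div_iff₀ hβ]
        nlinarith [h5, a6, hβ, hS0]
      · rw [div_le_iff₀ hβ]
        have c4 := mul_le_mul_of_nonneg_left a2 (by positivity : (0:ℝ) ≤ A)
        have c5 := mul_le_mul_of_nonneg_left a5 (by positivity : (0:ℝ) ≤ A * (1 + β))
        have hup2 : S ≤ β * (A * (1 + β) + n) := by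
          calc S ≤ A * Eq + n * β := a4
          _ ≤ A * ((1 + β) * Sw) + n * β := by linarith [c4]
          _ = (A * (1 + β)) * Sw + n * β := by ring
          _ ≤ (A * (1 + β)) * β + n * β := by linarith [c5]
          _ = β * (A * (1 + β) + n) := by ring
        have d1 := mul_le_mul_of_nonneg_left hup2 h1β.le
        have d2 : 0 ≤ (1 + β) * β * (1 - A * β) :=
          mul_nonneg (mul_nonneg h1β.le hβ.le) (by linarith)
        nlinarith [d1, d2]

end prelude

section blocks

variable {k : ℕ} {s : Finset (Fin k)}

lemma blockNorm_nonneg (V : EuclideanSpace ℝ (Fin k)) : 0 ≤ blockNorm s V :=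
  Real.sqrt_nonneg _

lemma blockNorm_smul (c : ℝ) (V : EuclideanSpace ℝ (Fin k)) :
    blockNorm s (c • V) = |c| * blockNorm s V := by
  unfold blockNorm
  have : ∀ i ∈ s, (c • V) i ^ 2 = c ^ 2 * V i ^ 2 := by
    intro i _
    simp [PiLp.smul_apply, smul_eq_mul]; ring
  rw [Finset.sum_congr rfl this, ← Finset.mul_sum, Real.sqrt_mul (sq_nonneg c),
    Real.sqrt_sq_eq_abs]

lemma blockNorm_neg (V : EuclideanSpace ℝ (Fin k)) : blockNorm s (-V) = blockNorm s V := by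
  unfold blockNorm
  congr 1
  exact Finset.sum_congr rfl fun i _ => by simp

lemma blockInner_self (V : EuclideanSpace ℝ (Fin k)) :
    blockInner s V V = blockNorm s V ^ 2 := by
  unfold blockInner blockNorm
  rw [Real.sq_sqrt (Finset.sum_nonneg fun i _ => sq_nonneg _)]
  exact Finset.sum_congr rfl fun i _ => (sq (V i)).symm ▸ by ring

lemma blockInner_smul_smul (c d : ℝ) (V U : EuclideanSpace ℝ (Fin k)) :
    blockInner s (c • V) (d • U) = c * d * blockInner s V U := by
  unfold blockInner
  rw [Finset.mul_sum]
  exact Finset.sum_congr rfl fun i _ => by simp [PiLp.smul_apply, smul_eq_mul]; ring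

lemma blockInner_smul_right (c : ℝ) (V U : EuclideanSpace ℝ (Fin k)) :
    blockInner s V (c • U) = c * blockInner s V U := by
  unfold blockInner
  rw [Finset.mul_sum]
  exact Finset.sum_congr rfl fun i _ => by simp [PiLp.smul_apply, smul_eq_mul]; ring

lemma blockInner_neg_right (V U : EuclideanSpace ℝ (Fin k)) :
    blockInner s V (-U) = -blockInner s V U := by
  unfold blockInner
  simp [mul_neg, Finset.sum_neg_distrib]

lemma tendsto_blockNorm {ι : Type*} {l : Filter ι} {f : ι → EuclideanSpace ℝ (Fin k)}
    {x : EuclideanSpace ℝ (Fin k)} (h : Tendsto f l (nhds x)) :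
    Tendsto (fun t => blockNorm s (f t)) l (nhds (blockNorm s x)) := by
  unfold blockNorm
  apply (Real.continuous_sqrt.tendsto _).comp
  apply tendsto_finset_sum
  intro i _
  exact (((EuclideanSpace.proj (𝕜 := ℝ) i).continuous.tendsto x).comp h).pow 2

lemma tendsto_blockInner {ι : Type*} {l : Filter ι} {f g : ι → EuclideanSpace ℝ (Fin k)}
    {x y : EuclideanSpace ℝ (Fin k)} (hf : Tendsto f l (nhds x)) (hg : Tendsto g l (nhds y)) :
    Tendsto (fun t => blockInner s (f t) (g t)) l (nhds (blockInner s x y)) := by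
  unfold blockInner
  apply tendsto_finset_sum
  intro i _
  exact (((EuclideanSpace.proj (𝕜 := ℝ) i).continuous.tendsto x).comp hf).mul
    (((EuclideanSpace.proj (𝕜 := ℝ) i).continuous.tendsto y).comp hg)

end blocks

theorem statement_15
    (n k : ℕ) (hn : 0 < n) (L : ℝ) (hL : 0 < L)
    (p : Fin n → EuclideanSpace ℝ (Fin k) → ℝ)
    (hp : ∀ i, ContDiff ℝ 1 (p i))
    (hhom : ∀ i (c : ℝ), 0 < c → ∀ V, p i (c • V) = c ^ L * p i V)
    (ℓ : ℝ → ℝ)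
    (hℓ : ℓ = (fun z => Real.exp (-z)) ∨ ℓ = fun z => Real.log (1 + Real.exp (-z)))
    (𝓛 : EuclideanSpace ℝ (Fin k) → ℝ)
    (h𝓛 : 𝓛 = fun V => ∑ i, ℓ (p i V))
    (α : EuclideanSpace ℝ (Fin k) → ℝ)
    (hα : α = fun V => Function.invFun ℓ (𝓛 V))
    (W : ℝ → EuclideanSpace ℝ (Fin k))
    (hW : ∀ t : ℝ, 0 ≤ t → HasDerivAt W (-gradient 𝓛 (W t)) t)
    (hinit : 𝓛 (W 0) < ℓ 0)
    (hWnorm : Tendsto (fun t => ‖W t‖) atTop atTop)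
    (hdir : ∃ Wbar, Tendsto (fun t => ‖W t‖⁻¹ • W t) atTop (nhds Wbar))
    (a : ℝ) (ha : 0 < a)
    (halpha : Tendsto (fun t => α (W t) / ‖W t‖ ^ L) atTop (nhds a))
    (halign : Tendsto
      (fun t => ⟪W t, -gradient 𝓛 (W t)⟫ / (‖W t‖ * ‖gradient 𝓛 (W t)‖))
      atTop (nhds 1))
    -- a partition of the coordinates into blocks
    (r : ℕ) (P : Fin r → Finset (Fin k))
    (hPdisj : ∀ j j' : Fin r, j ≠ j' → Disjoint (P j) (P j'))
    (hPcover : ∀ i : Fin k, ∃ j, i ∈ P j) :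
    ∃ sbar : Fin r → ℝ,
      (∀ j, Tendsto (fun t => blockNorm (P j) (W t) ^ L / ‖W t‖ ^ L)
        atTop (nhds (sbar j))) ∧
      (∀ j, ∃ c : ℝ,
        Tendsto (fun t => blockNorm (P j) (W t) * blockNorm (P j) (gradient 𝓛 (W t)) /
          (‖W t‖ * ‖gradient 𝓛 (W t)‖)) atTop (nhds c) ∧
        Tendsto (fun t => blockInner (P j) (W t) (-gradient 𝓛 (W t)) /
          (‖W t‖ * ‖gradient 𝓛 (W t)‖)) atTop (nhds c)) ∧
      ∀ j, 0 < sbar j →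
        Tendsto (fun t => blockNorm (P j) (W t) / ‖W t‖)
          atTop (nhds (sbar j ^ (1 / L))) ∧
        Tendsto (fun t => blockNorm (P j) (gradient 𝓛 (W t)) / ‖gradient 𝓛 (W t)‖)
          atTop (nhds (sbar j ^ (1 / L))) ∧
        Tendsto (fun t => blockInner (P j) (W t) (-gradient 𝓛 (W t)) /
            (blockNorm (P j) (W t) * blockNorm (P j) (gradient 𝓛 (W t))))
          atTop (nhds 1) ∧
        Tendsto (fun t => blockInner (P j) (W t) (gradient α (W t)) /
            blockNorm (P j) (W t) ^ L)
          atTop (nhds (a * L * sbar j ^ ((2 - L) / L))) ∧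
        Tendsto (fun t => blockNorm (P j) (gradient α (W t)) /
            blockNorm (P j) (W t) ^ (L - 1))
          atTop (nhds (a * L * sbar j ^ ((2 - L) / L))) := by
  obtain ⟨ℓd, ψ, ψd, hℓpos, hℓd, hℓinj, hψ, hψd, hψdneg, hℓanti, hKEY⟩ := loss_package n hn ℓ hℓ
  -- positivity of 𝓛
  have hLpos : ∀ V, 0 < 𝓛 V := by
    intro V; rw [h𝓛]
    haveI : Nonempty (Fin n) := Fin.pos_iff_nonempty.mp hn
    exact Finset.sum_pos (fun i _ => hℓpos _) Finset.univ_nonempty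
  -- differentiability of 𝓛
  have hpdiff : ∀ i V, DifferentiableAt ℝ (p i) V := fun i V =>
    ((hp i).differentiable one_ne_zero).differentiableAt
  have hLfder : ∀ V, HasFDerivAt 𝓛
      (∑ i, ℓd (p i V) • fderiv ℝ (p i) V) V := by
    intro V; rw [h𝓛]
    exact HasFDerivAt.fun_sum fun i _ =>
      (hℓd (p i V)).comp_hasFDerivAt V (hpdiff i V).hasFDerivAt
  have hLdiff : ∀ V, DifferentiableAt ℝ 𝓛 V := fun V => (hLfder V).differentiableAt
  have hLgradAt : ∀ V, HasGradientAt 𝓛 (gradient 𝓛 V) V := fun V => (hLdiff V).hasGradientAt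
  -- α = ψ ∘ 𝓛
  have hαeq : ∀ V, α V = ψ (𝓛 V) := by
    intro V
    rw [hα]
    show Function.invFun ℓ (𝓛 V) = ψ (𝓛 V)
    conv_lhs => rw [← hψ (𝓛 V) (hLpos V)]
    exact Function.leftInverse_invFun hℓinj _
  have hℓα : ∀ V, ℓ (α V) = 𝓛 V := fun V => by rw [hαeq V, hψ _ (hLpos V)]
  -- gradient of α
  have hgradα : ∀ V, gradient α V = ψd (𝓛 V) • gradient 𝓛 V := by
    intro V
    have h2 : HasFDerivAt 𝓛 ((InnerProductSpace.toDual ℝ _) (gradient 𝓛 V)) V :=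
      (hLgradAt V).hasFDerivAt
    have h3 : HasDerivAt ψ (ψd (𝓛 V)) (𝓛 V) := hψd _ (hLpos V)
    have h4 := h3.comp_hasFDerivAt V h2
    have h5 : HasGradientAt α (ψd (𝓛 V) • gradient 𝓛 V) V := by
      rw [hasGradientAt_iff_hasFDerivAt]
      have h6 : (InnerProductSpace.toDual ℝ (EuclideanSpace ℝ (Fin k)))
          (ψd (𝓛 V) • gradient 𝓛 V)
          = ψd (𝓛 V) • (InnerProductSpace.toDual ℝ _) (gradient 𝓛 V) := map_smul _ _ _
      rw [h6]
      have h7 : α = fun U => ψ (𝓛 U) := funext hαeq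
      rw [h7]
      exact h4
    exact h5.gradient
  -- Euler identity
  have hEuler : ∀ V, ⟪gradient 𝓛 V, V⟫ = L * ∑ i, ℓd (p i V) * p i V := by
    intro V
    -- inner product with gradient equals directional derivative
    have hdual : ⟪gradient 𝓛 V, V⟫
        = (∑ i, ℓd (p i V) • fderiv ℝ (p i) V) V := by
      have h1 := (hLgradAt V).hasFDerivAt.unique (hLfder V)
      have h2 := congrArg (fun (f : EuclideanSpace ℝ (Fin k) →L[ℝ] ℝ) => f V) h1
      simpa [InnerProductSpace.toDual_apply_apply] using h2
    -- derivative of c ↦ 𝓛 (c • V) at c = 1, computed two ways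
    have hsmul : HasDerivAt (fun c : ℝ => c • V) V 1 := by
      simpa using (hasDerivAt_id (1:ℝ)).smul_const V
    have hg1 : HasDerivAt (fun c : ℝ => 𝓛 (c • V))
        ((∑ i, ℓd (p i V) • fderiv ℝ (p i) V) V) 1 := by
      have := (show HasFDerivAt 𝓛 (∑ i, ℓd (p i V) • fderiv ℝ (p i) V) ((1:ℝ) • V) by
        simpa using hLfder V).comp_hasDerivAt 1 hsmul
      simpa [Function.comp_def] using this
    have hg2 : HasDerivAt (fun c : ℝ => ∑ i, ℓ (c ^ L * p i V))
        (∑ i, ℓd (p i V) * (L * p i V)) 1 := by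
      apply HasDerivAt.fun_sum
      intro i _
      have hr : HasDerivAt (fun c : ℝ => c ^ L) (L * (1:ℝ) ^ (L - 1)) 1 :=
        Real.hasDerivAt_rpow_const (Or.inl one_ne_zero)
      have hr2 : HasDerivAt (fun c : ℝ => c ^ L * p i V) (L * p i V) 1 := by
        simpa [Real.one_rpow] using hr.mul_const (p i V)
      have hval : ((1:ℝ) ^ L * p i V) = p i V := by rw [Real.one_rpow, one_mul]
      have hc : HasDerivAt ℓ (ℓd (p i V)) ((1:ℝ) ^ L * p i V) := by
        rw [hval]; exact hℓd _
      simpa [hval, Function.comp_def] using hc.comp 1 hr2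
    have hev : (fun c : ℝ => ∑ i, ℓ (c ^ L * p i V)) =ᶠ[nhds 1] (fun c : ℝ => 𝓛 (c • V)) := by
      filter_upwards [isOpen_Ioi.mem_nhds (show (0:ℝ) < 1 by norm_num)] with c hc
      rw [h𝓛]
      exact Finset.sum_congr rfl fun i _ => by rw [hhom i c hc V]
    have hg2' : HasDerivAt (fun c : ℝ => 𝓛 (c • V))
        (∑ i, ℓd (p i V) * (L * p i V)) 1 := by
      exact hg2.congr_of_eventuallyEq hev.symm
    have := hg1.unique hg2'
    rw [hdual, this, Finset.mul_sum]
    exact Finset.sum_congr rfl fun i _ => by ring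
  obtain ⟨Wbar, hu⟩ := hdir
  -- norm of W tends to infinity in rpow
  have hWL : Tendsto (fun t => ‖W t‖ ^ L) atTop atTop := (tendsto_rpow_atTop hL).comp hWnorm
  have hWLpos : ∀ᶠ t in atTop, 0 < ‖W t‖ ^ L := hWL.eventually_gt_atTop 0
  have hWpos : ∀ᶠ t in atTop, 0 < ‖W t‖ := hWnorm.eventually_gt_atTop 0
  have hAt : Tendsto (fun t => α (W t)) atTop atTop := by
    have h1 : Tendsto (fun t => α (W t) / ‖W t‖ ^ L * ‖W t‖ ^ L) atTop atTop :=
      Tendsto.pos_mul_atTop ha halpha hWL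
    apply h1.congr'
    filter_upwards [hWLpos] with t ht
    field_simp
  have hA1 : ∀ᶠ t in atTop, 1 ≤ α (W t) := hAt.eventually_ge_atTop 1
  -- the radial quantity
  have hIdent : ∀ t, ⟪W t, gradient α (W t)⟫
      = L * (ψd (ℓ (α (W t))) * ∑ i, ℓd (p i (W t)) * p i (W t)) := by
    intro t
    rw [hgradα, real_inner_smul_right, real_inner_comm, hEuler, hℓα]
    ring
  have hIbounds : ∀ᶠ t in atTop,
      α (W t) - 1 ≤ ψd (ℓ (α (W t))) * ∑ i, ℓd (p i (W t)) * p i (W t)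
      ∧ ψd (ℓ (α (W t))) * ∑ i, ℓd (p i (W t)) * p i (W t)
          ≤ (1 + Real.exp (-α (W t))) * (α (W t) + n + 1) := by
    filter_upwards [hA1] with t ht
    exact hKEY (α (W t)) ht (fun i => p i (W t))
      (by rw [hℓα (W t), h𝓛])
  have hmid : Tendsto
      (fun t => (ψd (ℓ (α (W t))) * ∑ i, ℓd (p i (W t)) * p i (W t)) / ‖W t‖ ^ L)
      atTop (nhds a) := by
    have hDlow : Tendsto (fun t => (α (W t) - 1) / ‖W t‖ ^ L) atTop (nhds a) := by
      have h1 := halpha.sub hWL.inv_tendsto_atTop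
      simp only [sub_zero] at h1
      apply h1.congr
      intro t; simp only [Pi.inv_apply]; ring
    have hexp0 : Tendsto (fun t => Real.exp (-α (W t))) atTop (nhds 0) :=
      Real.tendsto_exp_atBot.comp (tendsto_neg_atTop_atBot.comp hAt)
    have hDhigh : Tendsto
        (fun t => (1 + Real.exp (-α (W t))) * ((α (W t) + n + 1) / ‖W t‖ ^ L))
        atTop (nhds a) := by
      have h1 : Tendsto (fun t => 1 + Real.exp (-α (W t))) atTop (nhds 1) := by
        simpa using (tendsto_const_nhds (x := (1:ℝ)) (f := atTop)).add hexp0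
      have h2 : Tendsto (fun t => (α (W t) + n + 1) / ‖W t‖ ^ L) atTop (nhds a) := by
        have h3 := halpha.add (hWL.inv_tendsto_atTop.const_mul ((n : ℝ) + 1))
        simp only [mul_zero, add_zero] at h3
        apply h3.congr
        intro t; simp only [Pi.inv_apply]; ring
      simpa using h1.mul h2
    refine tendsto_of_tendsto_of_tendsto_of_le_of_le' hDlow hDhigh ?_ ?_
    · filter_upwards [hIbounds, hWLpos] with t ht hX
      exact (div_le_div_iff_of_pos_right hX).mpr ht.1
    · filter_upwards [hIbounds, hWLpos] with t ht hX
      rw [← mul_div_assoc]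
      exact (div_le_div_iff_of_pos_right hX).mpr ht.2
  have hJ : Tendsto (fun t => ⟪W t, gradient α (W t)⟫ / ‖W t‖ ^ L)
      atTop (nhds (a * L)) := by
    have h1 := hmid.const_mul L
    have h2 : L * a = a * L := mul_comm L a
    rw [h2] at h1
    apply h1.congr
    intro t
    rw [hIdent t]; ring
  -- alignment: eventual nonvanishing of the gradient
  have hcosev : ∀ᶠ t in atTop,
      1/2 < ⟪W t, -gradient 𝓛 (W t)⟫ / (‖W t‖ * ‖gradient 𝓛 (W t)‖) :=
    halign.eventually (eventually_gt_nhds (by norm_num))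
  have hgne : ∀ᶠ t in atTop, gradient 𝓛 (W t) ≠ 0 := by
    filter_upwards [hcosev] with t ht h0
    rw [h0] at ht
    simp at ht
    linarith
  -- the normalized negative gradient converges to Wbar
  have hvlim : Tendsto (fun t => ‖gradient 𝓛 (W t)‖⁻¹ • (-gradient 𝓛 (W t)))
      atTop (nhds Wbar) := by
    set v := fun t => ‖gradient 𝓛 (W t)‖⁻¹ • (-gradient 𝓛 (W t)) with hvdef
    have huv : Tendsto (fun t => ⟪‖W t‖⁻¹ • W t, v t⟫) atTop (nhds 1) := by
      apply halign.congr'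
      filter_upwards [hWpos, hgne] with t ht hg
      rw [hvdef]
      simp only
      rw [real_inner_smul_left, real_inner_smul_right]
      have hgn : ‖gradient 𝓛 (W t)‖ ≠ 0 := norm_ne_zero_iff.mpr hg
      field_simp
    have hnormdiff : Tendsto (fun t => ‖(‖W t‖⁻¹ • W t) - v t‖) atTop (nhds 0) := by
      have hsq : Tendsto (fun t => ‖(‖W t‖⁻¹ • W t) - v t‖ ^ 2) atTop (nhds 0) := by
        have h2 : Tendsto (fun t => 2 - 2 * ⟪‖W t‖⁻¹ • W t, v t⟫) atTop (nhds 0) := by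
          have h3 := (tendsto_const_nhds (x := (2:ℝ)) (f := atTop)).sub (huv.const_mul 2)
          simpa using h3
        apply h2.congr'
        filter_upwards [hWpos, hgne] with t ht hg
        have hu1 : ‖(‖W t‖⁻¹ • W t)‖ = 1 := by
          rw [norm_smul, norm_inv, norm_norm, inv_mul_cancel₀ ht.ne']
        have hv1 : ‖v t‖ = 1 := by
          rw [hvdef]
          simp only [norm_smul, norm_inv, norm_norm, norm_neg]
          exact inv_mul_cancel₀ (norm_ne_zero_iff.mpr hg)
        rw [norm_sub_sq_real, hu1, hv1]
        ring
      have h4 := (Real.continuous_sqrt.tendsto 0).comp hsq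
      simp only [Real.sqrt_zero] at h4
      apply h4.congr
      intro t
      exact Real.sqrt_sq (norm_nonneg _)
    have h3 : Tendsto (fun t => (‖W t‖⁻¹ • W t) - v t) atTop (nhds 0) :=
      tendsto_zero_iff_norm_tendsto_zero.mpr hnormdiff
    have h4 := hu.sub h3
    simpa using h4
  -- the normalized gradient-norm ratio tends to a*L
  have hB : Tendsto (fun t => ‖gradient α (W t)‖ / ‖W t‖ ^ (L-1)) atTop (nhds (a*L)) := by
    have h5 := hJ.div halign one_ne_zero
    simp only [div_one] at h5
    apply h5.congr'
    filter_upwards [hWpos, hgne, hcosev] with t ht hg hcos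
    have hψneg : ψd (𝓛 (W t)) < 0 := hψdneg _ (hLpos _)
    have hGpos : 0 < ‖gradient 𝓛 (W t)‖ := norm_pos_iff.mpr hg
    have hineg : 0 < ⟪W t, -gradient 𝓛 (W t)⟫ := by
      by_contra hcon
      push_neg at hcon
      have h6 : ⟪W t, -gradient 𝓛 (W t)⟫ / (‖W t‖ * ‖gradient 𝓛 (W t)‖) ≤ 0 :=
        div_nonpos_of_nonpos_of_nonneg hcon (by positivity)
      linarith
    have hNL : ‖W t‖ ^ L = ‖W t‖ * ‖W t‖ ^ (L-1) := by
      conv_lhs => rw [show L = 1 + (L-1) by ring]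
      rw [Real.rpow_add ht, Real.rpow_one]
    have hnum : ⟪W t, gradient α (W t)⟫ = ψd (𝓛 (W t)) * ⟪W t, gradient 𝓛 (W t)⟫ := by
      rw [hgradα, real_inner_smul_right]
    have hnorm : ‖gradient α (W t)‖ = -ψd (𝓛 (W t)) * ‖gradient 𝓛 (W t)‖ := by
      rw [hgradα, norm_smul, Real.norm_eq_abs, abs_of_neg hψneg]
    have hflip : ⟪W t, -gradient 𝓛 (W t)⟫ = -⟪W t, gradient 𝓛 (W t)⟫ :=
      inner_neg_right (𝕜 := ℝ) _ _
    have hipos : ⟪W t, gradient 𝓛 (W t)⟫ < 0 := by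
      rw [hflip] at hineg; linarith
    show ⟪W t, gradient α (W t)⟫ / ‖W t‖ ^ L /
        (⟪W t, -gradient 𝓛 (W t)⟫ / (‖W t‖ * ‖gradient 𝓛 (W t)‖))
        = ‖gradient α (W t)‖ / ‖W t‖ ^ (L-1)
    rw [hnum, hnorm, hflip, hNL]
    have hX1 : ‖W t‖ ^ (L-1) ≠ 0 := (Real.rpow_pos_of_pos ht _).ne'
    set c := (⟪W t, gradient 𝓛 (W t)⟫ : ℝ) with hc
    field_simp [hipos.ne]
  -- block norm of normalized vectors
  have hbnu : ∀ j : Fin r, Tendsto (fun t => blockNorm (P j) (‖W t‖⁻¹ • W t)) atTop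
      (nhds (blockNorm (P j) Wbar)) := fun j => tendsto_blockNorm hu
  have hbnv : ∀ j : Fin r, Tendsto
      (fun t => blockNorm (P j) (‖gradient 𝓛 (W t)‖⁻¹ • (-gradient 𝓛 (W t)))) atTop
      (nhds (blockNorm (P j) Wbar)) := fun j => tendsto_blockNorm hvlim
  have hbuev : ∀ j : Fin r, ∀ t, 0 < ‖W t‖ →
      blockNorm (P j) (‖W t‖⁻¹ • W t) = blockNorm (P j) (W t) / ‖W t‖ := by
    intro j t ht
    rw [blockNorm_smul, abs_of_pos (inv_pos.mpr ht), inv_mul_eq_div]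
  have hbvev : ∀ j : Fin r, ∀ t, gradient 𝓛 (W t) ≠ 0 →
      blockNorm (P j) (‖gradient 𝓛 (W t)‖⁻¹ • (-gradient 𝓛 (W t)))
        = blockNorm (P j) (gradient 𝓛 (W t)) / ‖gradient 𝓛 (W t)‖ := by
    intro j t hg
    rw [blockNorm_smul, blockNorm_neg, abs_of_pos (inv_pos.mpr (norm_pos_iff.mpr hg)),
      inv_mul_eq_div]
  refine ⟨fun j => blockNorm (P j) Wbar ^ L, ?_, ?_, ?_⟩
  · -- claim 1 : block mass fractions converge
    intro j
    have h1 := ((Real.continuousAt_rpow_const (blockNorm (P j) Wbar) L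
      (Or.inr hL.le)).tendsto).comp (hbnu j)
    apply h1.congr'
    filter_upwards [hWpos] with t ht
    show blockNorm (P j) (‖W t‖⁻¹ • W t) ^ L = blockNorm (P j) (W t) ^ L / ‖W t‖ ^ L
    rw [hbuev j t ht, Real.div_rpow (blockNorm_nonneg _) (norm_nonneg _)]
  · -- claim 2 : block alignment quantities converge to a common limit
    intro j
    refine ⟨blockNorm (P j) Wbar ^ 2, ?_, ?_⟩
    · rw [sq]
      apply ((hbnu j).mul (hbnv j)).congr'
      filter_upwards [hWpos, hgne] with t ht hg
      show _ = blockNorm (P j) (W t) * blockNorm (P j) (gradient 𝓛 (W t)) /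
          (‖W t‖ * ‖gradient 𝓛 (W t)‖)
      rw [hbuev j t ht, hbvev j t hg, div_mul_div_comm]
    · rw [← blockInner_self]
      apply (tendsto_blockInner hu hvlim).congr'
      filter_upwards [hWpos, hgne] with t ht hg
      show blockInner (P j) (‖W t‖⁻¹ • W t) (‖gradient 𝓛 (W t)‖⁻¹ • (-gradient 𝓛 (W t)))
          = _
      rw [blockInner_smul_smul, div_eq_mul_inv, mul_inv]
      ring
  · -- claim 3
    intro j hsj
    simp only at hsj
    have hnj0 : 0 ≤ blockNorm (P j) Wbar := blockNorm_nonneg _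
    have hnjpos : 0 < blockNorm (P j) Wbar := by
      rcases hnj0.lt_or_eq with h | h
      · exact h
      · exfalso
        rw [← h, Real.zero_rpow hL.ne'] at hsj
        exact lt_irrefl 0 hsj
    have hroot : (blockNorm (P j) Wbar ^ L) ^ (1/L) = blockNorm (P j) Wbar := by
      rw [← Real.rpow_mul hnj0, mul_one_div, div_self hL.ne', Real.rpow_one]
    -- eventual positivity of block norms
    have hbupos : ∀ᶠ t in atTop, 0 < blockNorm (P j) (‖W t‖⁻¹ • W t) :=
      (hbnu j).eventually (lt_mem_nhds (half_lt_self hnjpos))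
        |>.mono (fun t ht => lt_of_le_of_lt (by positivity) ht)
    have hbvpos : ∀ᶠ t in atTop,
        0 < blockNorm (P j) (‖gradient 𝓛 (W t)‖⁻¹ • (-gradient 𝓛 (W t))) :=
      (hbnv j).eventually (lt_mem_nhds (half_lt_self hnjpos))
        |>.mono (fun t ht => lt_of_le_of_lt (by positivity) ht)
    refine ⟨?_, ?_, ?_, ?_, ?_⟩
    · -- item 1
      rw [hroot]
      apply (hbnu j).congr'
      filter_upwards [hWpos] with t ht
      exact hbuev j t ht
    · -- item 2
      rw [hroot]
      apply (hbnv j).congr'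
      filter_upwards [hgne] with t hg
      exact hbvev j t hg
    · -- item 3
      have hX := tendsto_blockInner (s := P j) hu hvlim
      have hY := (hbnu j).mul (hbnv j)
      have hne : blockNorm (P j) Wbar * blockNorm (P j) Wbar ≠ 0 := by positivity
      have h5 := hX.div hY hne
      have hval : blockInner (P j) Wbar Wbar /
          (blockNorm (P j) Wbar * blockNorm (P j) Wbar) = 1 := by
        rw [blockInner_self, sq, div_self hne]
      rw [hval] at h5
      apply h5.congr'
      filter_upwards [hWpos, hgne, hbupos, hbvpos] with t ht hg hbu hbv
      have hWne : ‖W t‖ ≠ 0 := ht.ne'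
      have hGne : ‖gradient 𝓛 (W t)‖ ≠ 0 := norm_ne_zero_iff.mpr hg
      show blockInner (P j) (‖W t‖⁻¹ • W t) (‖gradient 𝓛 (W t)‖⁻¹ • (-gradient 𝓛 (W t))) /
          (blockNorm (P j) (‖W t‖⁻¹ • W t) *
            blockNorm (P j) (‖gradient 𝓛 (W t)‖⁻¹ • (-gradient 𝓛 (W t)))) = _
      have hbW : 0 < blockNorm (P j) (W t) := by
        have h9 : blockNorm (P j) (W t) = blockNorm (P j) (‖W t‖⁻¹ • W t) * ‖W t‖ := by
          rw [hbuev j t ht]; field_simp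
        rw [h9]; exact mul_pos hbu ht
      have hbG : 0 < blockNorm (P j) (gradient 𝓛 (W t)) := by
        have h9 : blockNorm (P j) (gradient 𝓛 (W t)) =
            blockNorm (P j) (‖gradient 𝓛 (W t)‖⁻¹ • (-gradient 𝓛 (W t))) *
              ‖gradient 𝓛 (W t)‖ := by
          rw [hbvev j t hg]; field_simp
        rw [h9]; exact mul_pos hbv (norm_pos_iff.mpr hg)
      rw [blockInner_smul_smul, hbuev j t ht, hbvev j t hg]
      field_simp
    · -- item 4
      have hinv : Tendsto (fun t => (blockNorm (P j) (‖W t‖⁻¹ • W t))⁻¹) atTop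
          (nhds (blockNorm (P j) Wbar)⁻¹) := (hbnu j).inv₀ hnjpos.ne'
      have hpow : Tendsto (fun t => ((blockNorm (P j) (‖W t‖⁻¹ • W t))⁻¹) ^ L) atTop
          (nhds ((blockNorm (P j) Wbar)⁻¹ ^ L)) :=
        ((Real.continuousAt_rpow_const _ L (Or.inl (inv_ne_zero hnjpos.ne'))).tendsto).comp hinv
      have hXuv := tendsto_blockInner (s := P j) hu hvlim
      have hlim := (hXuv.mul hB).mul hpow
      have hval : blockInner (P j) Wbar Wbar * (a * L) * ((blockNorm (P j) Wbar)⁻¹ ^ L)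
          = a * L * (blockNorm (P j) Wbar ^ L) ^ ((2-L)/L) := by
        rw [blockInner_self, Real.inv_rpow hnj0, ← Real.rpow_mul hnj0,
          show L * ((2-L)/L) = 2 - L by field_simp]
        have h2 : blockNorm (P j) Wbar ^ ((2:ℝ)-L)
            = blockNorm (P j) Wbar ^ 2 / blockNorm (P j) Wbar ^ L := by
          rw [Real.rpow_sub hnjpos]
          congr 1
          rw [show (2:ℝ) = ((2:ℕ):ℝ) by norm_num, Real.rpow_natCast]
        rw [h2, div_eq_mul_inv]
        ring
      rw [← hval]
      apply hlim.congr'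
      filter_upwards [hWpos, hgne, hbupos, hbvpos] with t ht hg hbu hbv
      have hψneg : ψd (𝓛 (W t)) < 0 := hψdneg _ (hLpos _)
      have hGpos : 0 < ‖gradient 𝓛 (W t)‖ := norm_pos_iff.mpr hg
      have hbW : 0 < blockNorm (P j) (W t) := by
        have h9 : blockNorm (P j) (W t) = blockNorm (P j) (‖W t‖⁻¹ • W t) * ‖W t‖ := by
          rw [hbuev j t ht]; field_simp
        rw [h9]; exact mul_pos hbu ht
      have hNL : ‖W t‖ ^ L = ‖W t‖ * ‖W t‖ ^ (L-1) := by
        conv_lhs => rw [show L = 1 + (L-1) by ring]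
        rw [Real.rpow_add ht, Real.rpow_one]
      have hnum : blockInner (P j) (W t) (gradient α (W t))
          = ψd (𝓛 (W t)) * blockInner (P j) (W t) (gradient 𝓛 (W t)) := by
        rw [hgradα, blockInner_smul_right]
      have hnorm : ‖gradient α (W t)‖ = -ψd (𝓛 (W t)) * ‖gradient 𝓛 (W t)‖ := by
        rw [hgradα, norm_smul, Real.norm_eq_abs, abs_of_neg hψneg]
      show blockInner (P j) (‖W t‖⁻¹ • W t) (‖gradient 𝓛 (W t)‖⁻¹ • (-gradient 𝓛 (W t))) *
          (‖gradient α (W t)‖ / ‖W t‖ ^ (L-1)) *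
          ((blockNorm (P j) (‖W t‖⁻¹ • W t))⁻¹ ^ L) = _
      rw [blockInner_smul_smul, blockInner_neg_right, hbuev j t ht, inv_div,
        Real.div_rpow (norm_nonneg _) (blockNorm_nonneg _), hnum, hnorm, hNL]
      have hX1 : ‖W t‖ ^ (L-1) ≠ 0 := (Real.rpow_pos_of_pos ht _).ne'
      have hX2 : blockNorm (P j) (W t) ^ L ≠ 0 := (Real.rpow_pos_of_pos hbW _).ne'
      field_simp
    · -- item 5
      have hinv : Tendsto (fun t => (blockNorm (P j) (‖W t‖⁻¹ • W t))⁻¹) atTop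
          (nhds (blockNorm (P j) Wbar)⁻¹) := (hbnu j).inv₀ hnjpos.ne'
      have hpow : Tendsto (fun t => ((blockNorm (P j) (‖W t‖⁻¹ • W t))⁻¹) ^ (L-1)) atTop
          (nhds ((blockNorm (P j) Wbar)⁻¹ ^ (L-1))) :=
        ((Real.continuousAt_rpow_const _ (L-1)
          (Or.inl (inv_ne_zero hnjpos.ne'))).tendsto).comp hinv
      have hlim := (((hbnv j).mul hB)).mul hpow
      have hval : blockNorm (P j) Wbar * (a * L) * ((blockNorm (P j) Wbar)⁻¹ ^ (L-1))
          = a * L * (blockNorm (P j) Wbar ^ L) ^ ((2-L)/L) := by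
        rw [Real.inv_rpow hnj0, ← Real.rpow_mul hnj0,
          show L * ((2-L)/L) = 2 - L by field_simp]
        have h2 : blockNorm (P j) Wbar ^ ((2:ℝ)-L)
            = blockNorm (P j) Wbar * (blockNorm (P j) Wbar ^ (L-1))⁻¹ := by
          rw [show (2:ℝ)-L = 1 + (-(L-1)) by ring, Real.rpow_add hnjpos, Real.rpow_one,
            Real.rpow_neg hnj0]
        rw [h2]
        ring
      rw [← hval]
      apply hlim.congr'
      filter_upwards [hWpos, hgne, hbupos, hbvpos] with t ht hg hbu hbv
      have hψneg : ψd (𝓛 (W t)) < 0 := hψdneg _ (hLpos _)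
      have hGpos : 0 < ‖gradient 𝓛 (W t)‖ := norm_pos_iff.mpr hg
      have hbW : 0 < blockNorm (P j) (W t) := by
        have h9 : blockNorm (P j) (W t) = blockNorm (P j) (‖W t‖⁻¹ • W t) * ‖W t‖ := by
          rw [hbuev j t ht]; field_simp
        rw [h9]; exact mul_pos hbu ht
      have hnormb : blockNorm (P j) (gradient α (W t))
          = -ψd (𝓛 (W t)) * blockNorm (P j) (gradient 𝓛 (W t)) := by
        rw [hgradα, blockNorm_smul, abs_of_neg hψneg]
      have hnorm : ‖gradient α (W t)‖ = -ψd (𝓛 (W t)) * ‖gradient 𝓛 (W t)‖ := by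
        rw [hgradα, norm_smul, Real.norm_eq_abs, abs_of_neg hψneg]
      show blockNorm (P j) (‖gradient 𝓛 (W t)‖⁻¹ • (-gradient 𝓛 (W t))) *
          (‖gradient α (W t)‖ / ‖W t‖ ^ (L-1)) *
          ((blockNorm (P j) (‖W t‖⁻¹ • W t))⁻¹ ^ (L-1)) = _
      rw [hbvev j t hg, hbuev j t ht, inv_div,
        Real.div_rpow (norm_nonneg _) (blockNorm_nonneg _), hnormb, hnorm]
      have hX1 : ‖W t‖ ^ (L-1) ≠ 0 := (Real.rpow_pos_of_pos ht _).ne'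
      have hX2 : blockNorm (P j) (W t) ^ (L-1) ≠ 0 := (Real.rpow_pos_of_pos hbW _).ne'
      field_simp
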